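/- Let A : H₁ → H₂ be a Hilbert–Schmidt operator with left singular vectors {uᵢ} and singular values {σᵢ}, let U_k be the quasi-matrix of the first k left singular vectors and V_k that of the first k right singular vectors. Let Y : ℝ^{k+p} → H₂ be a quasi-matrix whose j-th column is y_j = ∑ᵢ ω_{ij} σᵢ uᵢ with real coefficients ω_{ij} such that ∑ᵢ ω_{ij}² σᵢ² < ∞, and let Ω_k = [ω_{ij}]_{i≤k, j≤k+p} have full row rank k. Let Q Q* be the orthogonal projection onto range(Y). Then ‖A − Q Q* A‖²_HS ≤ ∑_{i>k} σᵢ² + ‖(Id − U_k U_k*) Y Ω_k†‖²_HS, where Ω_k† is the Moore–Penrose pseudoinverse of Ω_k. -/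

import Mathlib

open scoped RealInnerProductSpace

section Helpers

variable {H : Type*} [NormedAddCommGroup H] [InnerProductSpace ℝ H]

lemma coeff_of_hasSum {u : ℕ → H} (hu : Orthonormal ℝ u) {f : ℕ → ℝ} {x : H}
    (h : HasSum (fun m => f m • u m) x) (m : ℕ) : ⟪u m, x⟫ = f m := by
  have h2 := h.mapL (innerSL ℝ (u m))
  simp only [innerSL_apply_apply, real_inner_smul_right] at h2
  have h3 : HasSum (fun i => if i = m then f m else 0) (f m) := hasSum_ite_eq m (f m)
  have : (fun i => f i * ⟪u m, u i⟫) = fun i => if i = m then f m else 0 := by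
    funext i
    rw [orthonormal_iff_ite.mp hu]
    rcases eq_or_ne i m with hi | hi
    · simp [hi]
    · simp [hi, hi.symm]
  rw [this] at h2
  exact h2.unique h3

lemma normsq_of_hasSum {u : ℕ → H} (hu : Orthonormal ℝ u) {f : ℕ → ℝ} {x : H}
    (h : HasSum (fun m => f m • u m) x) : HasSum (fun m => (f m) ^ 2) (‖x‖ ^ 2) := by
  have h2 := h.mapL (innerSL ℝ x)
  simp only [innerSL_apply_apply, real_inner_smul_right] at h2
  have : (fun i => f i * ⟪x, u i⟫) = fun i => (f i) ^ 2 := by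
    funext i
    rw [real_inner_comm, coeff_of_hasSum hu h i, sq]
  rw [this, real_inner_self_eq_norm_sq] at h2
  exact h2

lemma parseval_sq {H : Type*} [NormedAddCommGroup H] [InnerProductSpace ℝ H]
    (e : HilbertBasis ℕ ℝ H) (x : H) :
    HasSum (fun n => ⟪x, e n⟫ ^ 2) (‖x‖ ^ 2) := by
  have h := e.hasSum_inner_mul_inner x x
  rw [real_inner_self_eq_norm_sq] at h
  have hfun : (fun n => ⟪x, e n⟫ ^ 2) = fun i => ⟪x, e i⟫ * ⟪e i, x⟫ := by
    funext n
    rw [sq, real_inner_comm x (e n)]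
  rw [hfun]
  exact h

end Helpers

set_option maxHeartbeats 2000000 in
theorem randomized_svd_structural_bound
    {H₁ H₂ : Type*}
    [NormedAddCommGroup H₁] [InnerProductSpace ℝ H₁] [CompleteSpace H₁]
    [NormedAddCommGroup H₂] [InnerProductSpace ℝ H₂] [CompleteSpace H₂]
    (A : H₁ →L[ℝ] H₂)
    (e : HilbertBasis ℕ ℝ H₁)
    (σ : ℕ → ℝ) (u : ℕ → H₂) (v : ℕ → H₁)
    (hu : Orthonormal ℝ u) (hv : Orthonormal ℝ v)
    (hσ : ∀ i, 0 ≤ σ i) (hσmono : Antitone σ)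
    (hSVD : ∀ x : H₁, HasSum (fun i => (σ i * ⟪v i, x⟫) • u i) (A x))
    (hHS : Summable fun i => ‖A (e i)‖ ^ 2)
    (k p : ℕ)
    (ω : ℕ → Fin (k + p) → ℝ)
    (y : Fin (k + p) → H₂)
    (hy : ∀ j, HasSum (fun i => (ω i j * σ i) • u i) (y j))
    (hrank : IsUnit ((Matrix.of fun (i : Fin k) (j : Fin (k + p)) => ω i j)
        * (Matrix.of fun (i : Fin k) (j : Fin (k + p)) => ω i j).transpose).det)
    (P : H₂ →L[ℝ] H₂)
    (hPidem : P ∘L P = P)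
    (hPsa : ∀ x z : H₂, ⟪P x, z⟫ = ⟪x, P z⟫)
    (hPmem : ∀ x : H₂, P x ∈ Submodule.span ℝ (Set.range y))
    (hPfix : ∀ z ∈ Submodule.span ℝ (Set.range y), P z = z) :
    ∑' i, ‖A (e i) - P (A (e i))‖ ^ 2
      ≤ (∑' i, (if k ≤ i then (σ i) ^ 2 else 0))
        + ∑ l : Fin k,
            ‖(∑ j : Fin (k + p),
                (((Matrix.of fun (i : Fin k) (j : Fin (k + p)) => ω i j).transpose
                  * ((Matrix.of fun (i : Fin k) (j : Fin (k + p)) => ω i j)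
                    * (Matrix.of fun (i : Fin k) (j : Fin (k + p)) => ω i j).transpose)⁻¹) j l) • y j)
              - ∑ i : Fin k, ⟪u i, (∑ j : Fin (k + p),
                  (((Matrix.of fun (i : Fin k) (j : Fin (k + p)) => ω i j).transpose
                    * ((Matrix.of fun (i : Fin k) (j : Fin (k + p)) => ω i j)
                      * (Matrix.of fun (i : Fin k) (j : Fin (k + p)) => ω i j).transpose)⁻¹) j l) • y j)⟫
                • u i‖ ^ 2 := by
  classical
  set M : Matrix (Fin k) (Fin (k + p)) ℝ := Matrix.of fun i j => ω i j with hM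
  set Pd : Matrix (Fin (k + p)) (Fin k) ℝ := M.transpose * (M * M.transpose)⁻¹ with hPdd
  -- pseudoinverse property
  have hMPd : M * Pd = 1 := by
    rw [hPdd, ← Matrix.mul_assoc]
    exact Matrix.mul_nonsing_inv _ hrank
  -- coefficients
  set c : ℕ → Fin k → ℝ := fun m l => ∑ j, ω m j * Pd j l with hc
  have hcδ : ∀ m, m < k → ∀ l : Fin k, c m l = if m = (l : ℕ) then 1 else 0 := by
    intro m hm l
    have := congrFun (congrFun hMPd ⟨m, hm⟩) l
    simp only [Matrix.mul_apply, Matrix.one_apply] at this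
    rw [hc]
    simp only [hM, Matrix.of_apply] at this ⊢
    rw [this]
    rcases eq_or_ne m (l : ℕ) with h | h
    · simp [Fin.ext_iff, h]
    · simp [Fin.ext_iff, h]
  -- the columns z of Y Ω†
  set z : Fin k → H₂ := fun l => ∑ j, Pd j l • y j with hzdef
  have hz : ∀ l, HasSum (fun m => (σ m * c m l) • u m) (z l) := by
    intro l
    have h1 : HasSum (fun m => ∑ j : Fin (k + p), Pd j l • ((ω m j * σ m) • u m)) (z l) := by
      exact hasSum_sum fun j _ => (hy j).const_smul (Pd j l)
    convert h1 using 2 with m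
    simp only [smul_smul]
    rw [← Finset.sum_smul]
    congr 1
    rw [hc, Finset.mul_sum]
    exact Finset.sum_congr rfl fun j _ => by ring
  have hzc : ∀ (m : ℕ) (l : Fin k), ⟪u m, z l⟫ = σ m * c m l := fun m l =>
    coeff_of_hasSum hu (hz l) m
  -- the residuals r
  set r : Fin k → H₂ := fun l => z l - ∑ i : Fin k, ⟪u i, z l⟫ • u i with hrdef
  have hfin : ∀ l : Fin k, HasSum (fun m => (if m < k then σ m * c m l else 0) • u m)
      (∑ i : Fin k, ⟪u i, z l⟫ • u i) := by
    intro l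
    have h0 : ∀ m ∉ Finset.range k, (if m < k then σ m * c m l else 0) • u m = 0 := by
      intro m hm
      simp only [Finset.mem_range, not_lt] at hm
      simp [Nat.not_lt.mpr hm]
    have h1 : HasSum (fun m => (if m < k then σ m * c m l else 0) • u m) _ :=
      hasSum_sum_of_ne_finset_zero h0
    convert h1 using 1
    rw [← Fin.sum_univ_eq_sum_range (fun m => (if m < k then σ m * c m l else 0) • u m) k]
    congr 1; funext i
    simp [hzc, i.isLt]
  have hr : ∀ l, HasSum (fun m => (if k ≤ m then σ m * c m l else 0) • u m) (r l) := by
    intro l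
    have := (hz l).sub (hfin l)
    convert this using 2 with m
    rcases lt_or_ge m k with h | h
    · simp [h, Nat.not_le.mpr h]
    · simp [h, Nat.not_lt.mpr h]
  have hrnorm : ∀ l, HasSum (fun m => (if k ≤ m then σ m * c m l else 0) ^ 2) (‖r l‖ ^ 2) :=
    fun l => normsq_of_hasSum hu (hr l)
  -- z l = σ l • u l + r l
  have hzdecomp : ∀ l : Fin k, z l = σ (l : ℕ) • u (l : ℕ) + r l := by
    intro l
    have : (∑ i : Fin k, ⟪u i, z l⟫ • u i) = σ (l : ℕ) • u (l : ℕ) := by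
      rw [Finset.sum_eq_single l]
      · rw [hzc, hcδ _ l.isLt]; simp
      · intro i _ hil
        rw [hzc, hcδ _ i.isLt]
        simp [Fin.ext_iff.not.mp hil, Fin.val_eq_val, hil]
      · simp
    rw [hrdef]
    simp only
    rw [this]
    abel
  -- the complementary projection Q
  set Q : H₂ →L[ℝ] H₂ := ContinuousLinearMap.id ℝ H₂ - P with hQdef
  have hQapp : ∀ x, Q x = x - P x := fun x => rfl
  have hPP : ∀ x, P (P x) = P x := fun x => congrArg (fun T : H₂ →L[ℝ] H₂ => T x) hPidem
  have hQQ : ∀ x, Q (Q x) = Q x := by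
    intro x
    simp only [hQapp, map_sub, hPP]
    abel
  have hQsa : ∀ x w : H₂, ⟪Q x, w⟫ = ⟪x, Q w⟫ := by
    intro x w
    simp only [hQapp, inner_sub_left, inner_sub_right, hPsa]
  have hQcontr : ∀ x, ‖Q x‖ ≤ ‖x‖ := by
    intro x
    have h1 : ‖Q x‖ ^ 2 = ⟪x, Q x⟫ := by
      rw [← real_inner_self_eq_norm_sq, hQsa x (Q x), hQQ]
    have h2 : ⟪x, Q x⟫ ≤ ‖x‖ * ‖Q x‖ := real_inner_le_norm x (Q x)
    nlinarith [norm_nonneg (Q x), norm_nonneg x]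
  have hQz : ∀ l, Q (z l) = 0 := by
    intro l
    have hmem : z l ∈ Submodule.span ℝ (Set.range y) :=
      Submodule.sum_mem _ fun j _ => Submodule.smul_mem _ _ (Submodule.subset_span ⟨j, rfl⟩)
    rw [hQapp, hPfix _ hmem, sub_self]
  -- the comparison vectors g
  set g : ℕ → H₂ := fun n => A (e n) - ∑ i : Fin k, ⟪v i, e n⟫ • z i with hgdef
  have hQg : ∀ n, Q (A (e n)) = Q (g n) := by
    intro n
    have h0 : Q (∑ i : Fin k, ⟪v i, e n⟫ • z i) = 0 := by
      rw [map_sum]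
      simp [map_smul, hQz]
    rw [hgdef]
    simp only [map_sub, h0, sub_zero]
  set D : ℕ → ℕ → ℝ := fun m n =>
    if k ≤ m then σ m * (⟪v m, e n⟫ - ∑ i : Fin k, c m i * ⟪v i, e n⟫) else 0 with hD
  have hg : ∀ n, HasSum (fun m => D m n • u m) (g n) := by
    intro n
    have h1 := hSVD (e n)
    have h2 : HasSum (fun m => (∑ i : Fin k, ⟪v i, e n⟫ * (σ m * c m i)) • u m)
        (∑ i : Fin k, ⟪v i, e n⟫ • z i) := by
      have h2' := hasSum_sum (s := (Finset.univ : Finset (Fin k)))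
        fun i _ => (hz i).const_smul (⟪v i, e n⟫ : ℝ)
      convert h2' using 2 with m
      simp only [smul_smul, Finset.sum_smul]
    have h3 := h1.sub h2
    convert h3 using 2 with m
    rw [← sub_smul]
    congr 1
    rcases lt_or_ge m k with h | h
    · have hs : ∑ i : Fin k, ⟪v i, e n⟫ * (σ m * c m i) = σ m * ⟪v m, e n⟫ := by
        rw [Finset.sum_eq_single (⟨m, h⟩ : Fin k)]
        · rw [hcδ m h]
          simp [mul_comm]
        · intro i _ hil
          rw [hcδ m h]
          have : m ≠ (i : ℕ) := fun hmi => hil (by simp [Fin.ext_iff, ← hmi])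
          simp [this]
        · simp
      rw [hD]
      simp only [Nat.not_le.mpr h, if_false, hs]
      ring
    · rw [hD]
      simp only [if_pos h]
      rw [mul_sub, Finset.mul_sum]
      congr 1
      exact Finset.sum_congr rfl fun i _ => by ring
  have hgnorm : ∀ n, HasSum (fun m => (D m n) ^ 2) (‖g n‖ ^ 2) :=
    fun n => normsq_of_hasSum hu (hg n)
  have hbound : ∀ n, ‖A (e n) - P (A (e n))‖ ^ 2 ≤ ‖g n‖ ^ 2 := by
    intro n
    have h1 : A (e n) - P (A (e n)) = Q (A (e n)) := (hQapp _).symm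
    rw [h1, hQg n]
    have := hQcontr (g n)
    nlinarith [norm_nonneg (Q (g n)), norm_nonneg (g n)]
  -- Parseval for the rows
  set w : ℕ → H₁ := fun m => v m - ∑ i : Fin k, c m i • v i with hwdef
  have hDw : ∀ m n, k ≤ m → D m n = σ m * ⟪w m, e n⟫ := by
    intro m n hm
    rw [hD]
    simp only [if_pos hm, hwdef]
    rw [inner_sub_left, sum_inner]
    simp only [real_inner_smul_left]
  have hwnorm : ∀ m, k ≤ m → ‖w m‖ ^ 2 = 1 + ∑ i : Fin k, (c m i) ^ 2 := by
    intro m hm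
    rw [hwdef]
    simp only
    rw [norm_sub_sq_real]
    have h1 : ‖v m‖ = 1 := hv.1 m
    have h2 : ⟪v m, ∑ i : Fin k, c m i • v i⟫ = 0 := by
      rw [inner_sum]
      refine Finset.sum_eq_zero fun i _ => ?_
      rw [real_inner_smul_right, orthonormal_iff_ite.mp hv]
      have : m ≠ (i : ℕ) := by
        have := i.isLt
        omega
      simp [this]
    have h3 : ‖∑ i : Fin k, c m i • v i‖ ^ 2 = ∑ i : Fin k, (c m i) ^ 2 := by
      rw [← real_inner_self_eq_norm_sq]
      have hv' : Orthonormal ℝ (fun i : Fin k => v (i : ℕ)) :=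
        hv.comp _ Fin.val_injective
      rw [hv'.inner_sum (fun i => c m i) (fun i => c m i) Finset.univ]
      simp [sq]
    rw [h1, h2, h3]
    ring
  have hDsq : ∀ m, HasSum (fun n => (D m n) ^ 2)
      (if k ≤ m then σ m ^ 2 * (1 + ∑ i : Fin k, (c m i) ^ 2) else 0) := by
    intro m
    rcases le_or_gt k m with hm | hm
    · rw [if_pos hm, ← hwnorm m hm]
      have := (parseval_sq e (w m)).mul_left (σ m ^ 2)
      have hf : (fun n => (D m n) ^ 2) = fun n => σ m ^ 2 * ⟪w m, e n⟫ ^ 2 := by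
        funext n
        rw [hDw m n hm]
        ring
      rw [hf]
      exact this
    · rw [if_neg (Nat.not_le.mpr hm)]
      have : (fun n => (D m n) ^ 2) = fun _ => (0 : ℝ) := by
        funext n
        rw [hD]
        simp [Nat.not_le.mpr hm]
      rw [this]
      exact hasSum_zero
  -- summability of the squared singular values
  have hAvm : ∀ m, ⟪u m, A (v m)⟫ = σ m := by
    intro m
    rw [coeff_of_hasSum hu (hSVD (v m)) m]
    have : ⟪v m, v m⟫ = (1 : ℝ) := by
      rw [real_inner_self_eq_norm_sq, hv.1 m]
      norm_num
    rw [this, mul_one]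
  have hadj : ∀ m n, ⟪ContinuousLinearMap.adjoint A (u m), e n⟫ = ⟪u m, A (e n)⟫ :=
    fun m n => ContinuousLinearMap.adjoint_inner_left A (e n) (u m)
  have hxi : ∀ m, HasSum (fun n => ⟪u m, A (e n)⟫ ^ 2)
      (‖ContinuousLinearMap.adjoint A (u m)‖ ^ 2) := by
    intro m
    have := parseval_sq e (ContinuousLinearMap.adjoint A (u m))
    convert this using 2 with n
    rw [hadj]
  have hσsq_le : ∀ m, σ m ^ 2 ≤ ‖ContinuousLinearMap.adjoint A (u m)‖ ^ 2 := by
    intro m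
    have h1 : σ m = ⟪ContinuousLinearMap.adjoint A (u m), v m⟫ := by
      rw [ContinuousLinearMap.adjoint_inner_left, hAvm]
    have h2 := real_inner_le_norm (ContinuousLinearMap.adjoint A (u m)) (v m)
    have h2' := real_inner_le_norm (ContinuousLinearMap.adjoint A (u m)) (-(v m))
    rw [hv.1 m, mul_one] at h2
    rw [inner_neg_right, norm_neg, hv.1 m, mul_one] at h2'
    rw [h1]
    have habs : |⟪ContinuousLinearMap.adjoint A (u m), v m⟫|
        ≤ ‖ContinuousLinearMap.adjoint A (u m)‖ := by
      rw [abs_le]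
      constructor
      · linarith
      · linarith
    calc ⟪ContinuousLinearMap.adjoint A (u m), v m⟫ ^ 2
        = |⟪ContinuousLinearMap.adjoint A (u m), v m⟫| ^ 2 := (sq_abs _).symm
      _ ≤ ‖ContinuousLinearMap.adjoint A (u m)‖ ^ 2 := by
          have := abs_nonneg (⟪ContinuousLinearMap.adjoint A (u m), v m⟫)
          nlinarith
  have hσsq_sum : Summable (fun m => σ m ^ 2) := by
    refine summable_of_sum_range_le (c := ∑' n, ‖A (e n)‖ ^ 2) (fun m => sq_nonneg _) (fun N => ?_)
    calc ∑ m ∈ Finset.range N, σ m ^ 2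
        ≤ ∑ m ∈ Finset.range N, ‖ContinuousLinearMap.adjoint A (u m)‖ ^ 2 :=
          Finset.sum_le_sum fun m _ => hσsq_le m
      _ = ∑ m ∈ Finset.range N, ∑' n, ⟪u m, A (e n)⟫ ^ 2 := by
          exact Finset.sum_congr rfl fun m _ => ((hxi m).tsum_eq).symm
      _ = ∑' n, ∑ m ∈ Finset.range N, ⟪u m, A (e n)⟫ ^ 2 :=
          (Summable.tsum_finsetSum fun m _ => (hxi m).summable).symm
      _ ≤ ∑' n, ‖A (e n)‖ ^ 2 := by
          refine Summable.tsum_le_tsum (fun n => ?_) ?_ hHS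
          · have := Orthonormal.sum_inner_products_le (A (e n))
              (s := Finset.range N) hu
            simpa [Real.norm_eq_abs, sq_abs] using this
          · exact summable_sum fun m _ => (hxi m).summable
  have htail_sum : Summable (fun m => if k ≤ m then σ m ^ 2 else 0) := by
    refine hσsq_sum.of_nonneg_of_le (fun m => ?_) (fun m => ?_)
    · split <;> simp [sq_nonneg]
    · split
      · exact le_rfl
      · exact sq_nonneg _
  -- assemble everything over ℝ≥0∞
  set S : ℝ := ∑' m, (if k ≤ m then σ m ^ 2 else 0) with hS
  set T : ℝ := ∑ l : Fin k, ‖r l‖ ^ 2 with hT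
  have hSnonneg : 0 ≤ S := tsum_nonneg fun m => by
    by_cases h : k ≤ m <;> simp [h, sq_nonneg]
  have hTnonneg : 0 ≤ T := Finset.sum_nonneg fun l _ => sq_nonneg _
  have hrsummand : ∀ l : Fin k,
      (∑' m, ENNReal.ofReal ((if k ≤ m then σ m * c m l else 0) ^ 2))
        = ENNReal.ofReal (‖r l‖ ^ 2) := by
    intro l
    rw [← ENNReal.ofReal_tsum_of_nonneg (fun m => sq_nonneg _) (hrnorm l).summable,
      (hrnorm l).tsum_eq]
  have hE1 : ∀ n, ENNReal.ofReal (‖g n‖ ^ 2) = ∑' m, ENNReal.ofReal ((D m n) ^ 2) := by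
    intro n
    rw [← (hgnorm n).tsum_eq,
      ENNReal.ofReal_tsum_of_nonneg (fun m => sq_nonneg _) (hgnorm n).summable]
  have hE2 : ∀ m, (∑' n, ENNReal.ofReal ((D m n) ^ 2))
      = ENNReal.ofReal (if k ≤ m then σ m ^ 2 else 0)
        + ∑ i : Fin k, ENNReal.ofReal (if k ≤ m then σ m ^ 2 * (c m i) ^ 2 else 0) := by
    intro m
    rw [← ENNReal.ofReal_tsum_of_nonneg (fun n => sq_nonneg _) (hDsq m).summable,
      (hDsq m).tsum_eq]
    rcases le_or_gt k m with hm | hm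
    · simp only [if_pos hm]
      have hsplit : σ m ^ 2 * (1 + ∑ i : Fin k, (c m i) ^ 2)
          = σ m ^ 2 + ∑ i : Fin k, σ m ^ 2 * (c m i) ^ 2 := by
        rw [mul_add, mul_one, Finset.mul_sum]
      rw [hsplit, ENNReal.ofReal_add (sq_nonneg _)
        (Finset.sum_nonneg fun i _ => mul_nonneg (sq_nonneg _) (sq_nonneg _)),
        ENNReal.ofReal_sum_of_nonneg fun i _ => mul_nonneg (sq_nonneg _) (sq_nonneg _)]
    · simp [Nat.not_le.mpr hm]
  have key : ∑' n, ENNReal.ofReal (‖A (e n) - P (A (e n))‖ ^ 2)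
      ≤ ENNReal.ofReal S + ENNReal.ofReal T := by
    calc ∑' n, ENNReal.ofReal (‖A (e n) - P (A (e n))‖ ^ 2)
        ≤ ∑' n, ENNReal.ofReal (‖g n‖ ^ 2) :=
          ENNReal.tsum_le_tsum fun n => ENNReal.ofReal_le_ofReal (hbound n)
      _ = ∑' n, ∑' m, ENNReal.ofReal ((D m n) ^ 2) := tsum_congr fun n => hE1 n
      _ = ∑' m, ∑' n, ENNReal.ofReal ((D m n) ^ 2) := ENNReal.tsum_comm
      _ = ∑' m, (ENNReal.ofReal (if k ≤ m then σ m ^ 2 else 0)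
            + ∑ i : Fin k, ENNReal.ofReal (if k ≤ m then σ m ^ 2 * (c m i) ^ 2 else 0)) :=
          tsum_congr fun m => hE2 m
      _ = (∑' m, ENNReal.ofReal (if k ≤ m then σ m ^ 2 else 0))
            + ∑' m, ∑ i : Fin k, ENNReal.ofReal (if k ≤ m then σ m ^ 2 * (c m i) ^ 2 else 0) :=
          ENNReal.tsum_add
      _ = ENNReal.ofReal S + ENNReal.ofReal T := by
          congr 1
          · rw [hS, ENNReal.ofReal_tsum_of_nonneg
              (fun m => by by_cases h : k ≤ m <;> simp [h, sq_nonneg]) htail_sum]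
          · rw [Summable.tsum_finsetSum fun i _ => ENNReal.summable, hT,
              ENNReal.ofReal_sum_of_nonneg fun l _ => sq_nonneg _]
            refine Finset.sum_congr rfl fun l _ => ?_
            rw [← hrsummand l]
            refine tsum_congr fun m => ?_
            congr 1
            rcases le_or_gt k m with hm | hm
            · simp [hm, mul_pow]
            · simp [Nat.not_le.mpr hm]
  have hsum_t : Summable fun n => ‖A (e n) - P (A (e n))‖ ^ 2 := by
    refine hHS.of_nonneg_of_le (fun n => sq_nonneg _) (fun n => ?_)
    have h1 : A (e n) - P (A (e n)) = Q (A (e n)) := (hQapp _).symm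
    rw [h1]
    have := hQcontr (A (e n))
    nlinarith [norm_nonneg (Q (A (e n))), norm_nonneg (A (e n))]
  have hfinal : (∑' n, ‖A (e n) - P (A (e n))‖ ^ 2) ≤ S + T := by
    have h1 : ENNReal.ofReal (∑' n, ‖A (e n) - P (A (e n))‖ ^ 2)
        ≤ ENNReal.ofReal (S + T) := by
      rw [ENNReal.ofReal_tsum_of_nonneg (fun n => sq_nonneg _) hsum_t,
        ENNReal.ofReal_add hSnonneg hTnonneg]
      exact key
    exact (ENNReal.ofReal_le_ofReal_iff (add_nonneg hSnonneg hTnonneg)).mp h1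
  exact hfinal
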